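/- arXiv:math/0511430 — 2 statements merged into one kernel-verified Lean document; each statement's English description precedes it below -/
import Mathlib

section
/- In U(gl(2|1))[[t]]: [H₁, E₂] = −(1/2)(T + T')E₂ − (t/2)(T − T')E₃H₁ − (t/4)(T² − T'²)E₃, and [H₁, F₃] = −(1/2)(T + T')F₃ + (t/2)(T − T')F₂H₁ + (t/4)(T² − T'²)F₂. -/
noncomputable section

namespace SuperJordanian

open scoped BigOperators

/-- The generalized binomial coefficient `C(1/2, n)`. -/
def cHalf (n : ℕ) : ℂ :=
  (∏ i ∈ Finset.range n, ((1 : ℂ) / 2 - (i : ℂ))) / (n.factorial : ℂ)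

/-- Parity for `gl(2|1)`: `p(i,j) = 1` iff exactly one of `i`, `j` equals the third index. -/
def par (i j : Fin 3) : ℕ :=
  if (i = 2 ∧ j ≠ 2) ∨ (i ≠ 2 ∧ j = 2) then 1 else 0

/-- The generator `e_{ij}` in the free algebra. -/
def gen (i j : Fin 3) : FreeAlgebra ℂ (Fin 3 × Fin 3) := FreeAlgebra.ι ℂ (i, j)

/-- Defining relations of the enveloping algebra `U(gl(2|1))`:
`e_{ij} e_{kl} - (-1)^{p(i,j)p(k,l)} e_{kl} e_{ij}
  = δ_{jk} e_{il} - (-1)^{p(i,j)p(k,l)} δ_{li} e_{kj}`. -/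
inductive Rel : FreeAlgebra ℂ (Fin 3 × Fin 3) → FreeAlgebra ℂ (Fin 3 × Fin 3) → Prop
  | mk (i j k l : Fin 3) :
      Rel (gen i j * gen k l - ((-1 : ℂ) ^ (par i j * par k l)) • (gen k l * gen i j))
        ((if j = k then gen i l else 0)
          - ((-1 : ℂ) ^ (par i j * par k l)) • (if l = i then gen k j else 0))

/-- The enveloping algebra `U = U(gl(2|1))`. -/
abbrev U : Type := RingQuot Rel

/-- The image of `e_{ij}` in `U`. -/
def e (i j : Fin 3) : U := RingQuot.mkAlgHom ℂ Rel (gen i j)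

/-- The formal power series ring `U[[t]]`. -/
abbrev V : Type := PowerSeries U

/-- The central formal variable `t`. -/
def tv : V := PowerSeries.X

/-- The inclusion `U → U[[t]]` as constant power series. -/
def C : U →+* V := PowerSeries.C (R := U)

def e₁ : U := e 0 1
def f₁ : U := e 1 0
def h₁ : U := e 0 0 - e 1 1
def e₂ : U := e 1 2
def f₂ : U := e 2 1
def h₂ : U := e 1 1 + e 2 2
def e₃ : U := e 0 2
def f₃ : U := e 2 0
def h₃ : U := h₁ + h₂

/-- `s = Σ_{n ≥ 0} C(1/2, n) t^{2n} e₁^{2n}`, so that `s² = 1 + t² e₁²`. -/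
def s : V := PowerSeries.mk fun m => if m % 2 = 0 then cHalf (m / 2) • (e₁ ^ m) else 0

def T : V := tv * C e₁ + s
def T' : V := -(tv * C e₁) + s
def H₁ : V := s * C h₁
def F₁ : V := C f₁ - ((1 : ℂ) / 4) • (tv ^ 2 * C (e₁ * (h₁ ^ 2 - 1)))
def H₂ : V := C h₂ - ((1 : ℂ) / 2) • (tv ^ 2 * C (e₁ ^ 2 * h₁))
def E₂ : V := C e₂ - ((1 : ℂ) / 4) • (tv ^ 2 * C (e₁ * e₃ * (2 * h₁ + 1)))
def F₂ : V := C f₂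
def H₃ : V := C h₃ + ((1 : ℂ) / 2) • (tv ^ 2 * C (e₁ ^ 2 * h₁))
def E₃ : V := C e₃
def F₃ : V := C f₃ + ((1 : ℂ) / 4) • (tv ^ 2 * C (e₁ * f₂ * (2 * h₁ + 1)))

/-- Commutator `[a, b] = ab - ba`. -/
def br (a b : V) : V := a * b - b * a

/-- Anticommutator `{a, b} = ab + ba`. -/
def ac (a b : V) : V := a * b + b * a


lemma e_rel (i j k l : Fin 3) :
    e i j * e k l - ((-1:ℂ)^(par i j * par k l)) • (e k l * e i j)
      = (if j = k then e i l else 0)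
        - ((-1:ℂ)^(par i j * par k l)) • (if l = i then e k j else 0) := by
  have h := RingQuot.mkAlgHom_rel ℂ (Rel.mk i j k l)
  simpa [e, map_sub, map_smul, map_mul, apply_ite (RingQuot.mkAlgHom ℂ Rel)] using h

lemma comm_rel (i j k l : Fin 3) (hp : par i j * par k l = 0) :
    e i j * e k l - e k l * e i j
      = (if j = k then e i l else 0) - (if l = i then e k j else 0) := by
  have h := e_rel i j k l
  rw [hp] at h
  simpa using h

lemma ue12 : e₁ * e₂ = e₂ * e₁ + e₃ := by
  have h := comm_rel 0 1 1 2 (by decide)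
  simp [(by decide : ¬((2:Fin 3) = 0))] at h
  rw [e₁, e₂, e₃, sub_eq_iff_eq_add] at *
  rw [h]; abel

lemma ue13 : e₁ * e₃ = e₃ * e₁ := by
  have h := comm_rel 0 1 0 2 (by decide)
  simp [(by decide : ¬((1:Fin 3) = 0)), (by decide : ¬((2:Fin 3) = 0))] at h
  rw [e₁, e₃, ← sub_eq_zero]; exact h

lemma ue1f2 : e₁ * f₂ = f₂ * e₁ := by
  have h := comm_rel 0 1 2 1 (by decide)
  simp [(by decide : ¬((1:Fin 3) = 2)), (by decide : ¬((1:Fin 3) = 0))] at h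
  rw [e₁, f₂, ← sub_eq_zero]; exact h

lemma ue1f3 : e₁ * f₃ = f₃ * e₁ - f₂ := by
  have h := comm_rel 0 1 2 0 (by decide)
  simp [(by decide : ¬((1:Fin 3) = 2))] at h
  rw [e₁, f₃, f₂, sub_eq_iff_eq_add] at *
  rw [h]; abel

lemma uh1e1 : h₁ * e₁ = e₁ * h₁ + (2:ℂ) • e₁ := by
  have h1 := comm_rel 0 0 0 1 (by decide)
  have h2 := comm_rel 1 1 0 1 (by decide)
  simp [(by decide : ¬((1:Fin 3) = 0))] at h1 h2
  rw [sub_eq_iff_eq_add] at h1 h2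
  rw [h₁, e₁, sub_mul, h1, h2, mul_sub]
  match_scalars <;> ring

lemma uh1e2 : h₁ * e₂ = e₂ * h₁ - e₂ := by
  have h1 := comm_rel 0 0 1 2 (by decide)
  have h2 := comm_rel 1 1 1 2 (by decide)
  simp [(by decide : ¬((0:Fin 3) = 1)), (by decide : ¬((2:Fin 3) = 0)),
    (by decide : ¬((2:Fin 3) = 1))] at h1 h2
  rw [sub_eq_iff_eq_add] at h2
  rw [sub_eq_zero] at h1
  rw [h₁, e₂, sub_mul, h1, h2, mul_sub]
  abel

lemma uh1e3 : h₁ * e₃ = e₃ * h₁ + e₃ := by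
  have h1 := comm_rel 0 0 0 2 (by decide)
  have h2 := comm_rel 1 1 0 2 (by decide)
  simp [(by decide : ¬((0:Fin 3) = 1)), (by decide : ¬((2:Fin 3) = 0)),
    (by decide : ¬((2:Fin 3) = 1)), (by decide : ¬((0:Fin 3) = 2))] at h1 h2
  rw [sub_eq_iff_eq_add] at h1
  rw [sub_eq_zero] at h2
  rw [h₁, e₃, sub_mul, h1, h2, mul_sub]
  abel

lemma uh1f2 : h₁ * f₂ = f₂ * h₁ + f₂ := by
  have h1 := comm_rel 0 0 2 1 (by decide)
  have h2 := comm_rel 1 1 2 1 (by decide)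
  simp [(by decide : ¬((0:Fin 3) = 2)), (by decide : ¬((1:Fin 3) = 0)),
    (by decide : ¬((1:Fin 3) = 2))] at h1 h2
  rw [sub_eq_zero] at h1
  rw [h₁, f₂, sub_mul, h1, mul_sub]
  rw [sub_eq_iff_eq_add] at h2
  rw [h2]; abel

lemma uh1f3 : h₁ * f₃ = f₃ * h₁ - f₃ := by
  have h1 := comm_rel 0 0 2 0 (by decide)
  have h2 := comm_rel 1 1 2 0 (by decide)
  simp [(by decide : ¬((0:Fin 3) = 2)), (by decide : ¬((0:Fin 3) = 1))] at h1 h2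
  rw [sub_eq_zero] at h2
  rw [sub_eq_iff_eq_add] at h1
  rw [h₁, f₃, sub_mul, h1, h2, mul_sub]
  abel

lemma upow_e3 (m : ℕ) : e₃ * e₁ ^ m = e₁ ^ m * e₃ :=
  ((Commute.symm (ue13 : Commute e₁ e₃)).pow_right m).eq

lemma upow_f2 (m : ℕ) : f₂ * e₁ ^ m = e₁ ^ m * f₂ :=
  ((Commute.symm (ue1f2 : Commute e₁ f₂)).pow_right m).eq

lemma upow_e2 (m : ℕ) : e₁ ^ m * e₂ = e₂ * e₁ ^ m + (m : ℂ) • (e₁ ^ (m - 1) * e₃) := by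
  induction m with
  | zero => simp
  | succ n ih =>
    have h1 : e₁ ^ (n + 1) * e₂ = e₁ * (e₁ ^ n * e₂) := by
      rw [pow_succ', mul_assoc]
    rw [h1, ih, mul_add, ← mul_assoc, ue12, mul_smul_comm, add_mul]
    cases n with
    | zero => simp
    | succ k =>
      simp only [Nat.add_sub_cancel]
      have h2 : e₁ * (e₁ ^ k * e₃) = e₁ ^ (k + 1) * e₃ := by
        rw [← mul_assoc, ← pow_succ']
      have h3 : e₃ * e₁ ^ (k+1) = e₁ ^ (k+1) * e₃ := upow_e3 _
      have h4 : e₂ * e₁ * e₁ ^ (k + 1) = e₂ * e₁ ^ (k+1+1) := by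
        rw [mul_assoc, ← pow_succ']
      rw [h2, h3, h4]
      push_cast
      match_scalars <;> ring

lemma upow_f3 (m : ℕ) : e₁ ^ m * f₃ = f₃ * e₁ ^ m - (m : ℂ) • (e₁ ^ (m - 1) * f₂) := by
  induction m with
  | zero => simp
  | succ n ih =>
    have h1 : e₁ ^ (n + 1) * f₃ = e₁ * (e₁ ^ n * f₃) := by
      rw [pow_succ', mul_assoc]
    rw [h1, ih, mul_sub, ← mul_assoc, ue1f3, mul_smul_comm, sub_mul]
    cases n with
    | zero => simp
    | succ k =>
      simp only [Nat.add_sub_cancel]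
      have h2 : e₁ * (e₁ ^ k * f₂) = e₁ ^ (k + 1) * f₂ := by
        rw [← mul_assoc, ← pow_succ']
      have h3 : f₂ * e₁ ^ (k+1) = e₁ ^ (k+1) * f₂ := upow_f2 _
      have h4 : f₃ * e₁ * e₁ ^ (k + 1) = f₃ * e₁ ^ (k+1+1) := by
        rw [mul_assoc, ← pow_succ']
      rw [h2, h3, h4]
      push_cast
      match_scalars <;> ring

lemma upow_h1 (m : ℕ) : h₁ * e₁ ^ m = e₁ ^ m * h₁ + ((2 * m : ℕ) : ℂ) • e₁ ^ m := by
  induction m with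
  | zero => simp
  | succ n ih =>
    have h1 : h₁ * e₁ ^ (n + 1) = (h₁ * e₁ ^ n) * e₁ := by
      rw [pow_succ, ← mul_assoc]
    have h2 : e₁ ^ n * (e₁ * h₁) = e₁ ^ (n+1) * h₁ := by
      rw [← mul_assoc, ← pow_succ]
    have h3 : e₁ ^ n * e₁ = e₁ ^ (n+1) := (pow_succ e₁ n).symm
    rw [h1, ih, add_mul, smul_mul_assoc, mul_assoc, uh1e1, mul_add, mul_smul_comm,
      h2, h3]
    push_cast
    match_scalars <;> ring

def wS : V := PowerSeries.mk fun m => if m % 2 = 0 then (((m : ℂ) + 2) * cHalf (m / 2 + 1)) • (e₁ ^ m) else 0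

lemma cHalf_rec (n : ℕ) : ((n:ℂ)+1) * cHalf (n+1) = (1/2 - n) * cHalf n := by
  unfold cHalf
  rw [Finset.prod_range_succ, Nat.factorial_succ]
  have h1 : ((n.factorial : ℂ)) ≠ 0 := by
    exact_mod_cast Nat.cast_ne_zero.mpr n.factorial_ne_zero
  have h2 : ((n:ℂ) + 1) ≠ 0 := by
    intro h; have := congrArg Complex.re h; simp at this
    have : (n:ℝ) = -1 := by linarith
    have := n.cast_nonneg (α := ℝ); linarith
  push_cast
  field_simp

lemma tv_comm (f : V) : f * tv = tv * f := (PowerSeries.commute_X f).eq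

lemma mkser_comm (γ : ℕ → ℂ) (x : U) (hx : e₁ * x = x * e₁) :
    (PowerSeries.mk fun m => if m % 2 = 0 then γ m • e₁ ^ m else 0 : V) * C x
      = C x * PowerSeries.mk fun m => if m % 2 = 0 then γ m • e₁ ^ m else 0 := by
  have hc : ∀ m : ℕ, e₁ ^ m * x = x * e₁ ^ m := fun m => (Commute.pow_left (hx : Commute e₁ x) m).eq
  ext n
  simp only [C, PowerSeries.coeff_mul_C, PowerSeries.coeff_C_mul, PowerSeries.coeff_mk]
  split_ifs with h
  · rw [smul_mul_assoc, mul_smul_comm, hc]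
  · simp

lemma s_comm (x : U) (hx : e₁ * x = x * e₁) : s * C x = C x * s :=
  mkser_comm _ x hx

lemma wS_comm (x : U) (hx : e₁ * x = x * e₁) : wS * C x = C x * wS :=
  mkser_comm _ x hx

lemma R2 : s * C e₂ = C e₂ * s + tv ^ 2 * (wS * C (e₁ * e₃)) := by
  ext m
  simp only [map_add, tv, C, s, wS, PowerSeries.coeff_mul_C, PowerSeries.coeff_C_mul,
    PowerSeries.coeff_X_pow_mul', PowerSeries.coeff_mk]
  by_cases h2 : m % 2 = 0
  · by_cases hm : 2 ≤ m
    · rw [if_pos hm, if_pos (by omega : (m - 2) % 2 = 0)]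
      simp only [if_pos h2]
      have hq : (m - 2) / 2 + 1 = m / 2 := by omega
      have hc : ((m - 2 : ℕ) : ℂ) + 2 = (m : ℂ) := by
        rw [Nat.cast_sub hm]; push_cast; ring
      have hp : e₁ ^ (m - 2) * (e₁ * e₃) = e₁ ^ (m - 1) * e₃ := by
        rw [← mul_assoc, ← pow_succ]
        congr 2
        omega
      rw [hq, hc, smul_mul_assoc, smul_mul_assoc, hp, upow_e2 m, mul_smul_comm, smul_add, smul_smul, mul_comm (cHalf (m / 2)) (m : ℂ)]
    · rw [if_neg hm]
      simp only [if_pos h2]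
      obtain rfl : m = 0 := by omega
      simp [smul_mul_assoc, mul_smul_comm]
  · simp only [if_neg h2]
    split_ifs with h3 h4
    · omega
    · simp
    · simp

lemma R3 : C h₁ * s = s * C h₁ + (2:ℂ) • (tv ^ 2 * (wS * C (e₁ ^ 2))) := by
  ext m
  simp only [map_add, PowerSeries.coeff_smul, tv, C, s, wS, PowerSeries.coeff_mul_C,
    PowerSeries.coeff_C_mul, PowerSeries.coeff_X_pow_mul', PowerSeries.coeff_mk]
  by_cases h2 : m % 2 = 0
  · by_cases hm : 2 ≤ m
    · rw [if_pos hm, if_pos (by omega : (m - 2) % 2 = 0)]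
      simp only [if_pos h2]
      have hq : (m - 2) / 2 + 1 = m / 2 := by omega
      have hc : ((m - 2 : ℕ) : ℂ) + 2 = (m : ℂ) := by
        rw [Nat.cast_sub hm]; push_cast; ring
      have hp : e₁ ^ (m - 2) * e₁ ^ 2 = e₁ ^ m := by
        rw [← pow_add]; congr 1; omega
      rw [hq, hc]
      simp only [smul_mul_assoc, mul_smul_comm]
      rw [hp, upow_h1 m]
      simp only [smul_add, smul_smul]
      push_cast
      match_scalars <;> ring
    · rw [if_neg hm]
      simp only [if_pos h2]
      obtain rfl : m = 0 := by omega
      simp [smul_mul_assoc, mul_smul_comm]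
  · simp only [if_neg h2]
    split_ifs with h3 h4
    · omega
    · simp
    · simp

lemma R4 : s * C f₃ = C f₃ * s - tv ^ 2 * (wS * C (e₁ * f₂)) := by
  ext m
  simp only [map_sub, tv, C, s, wS, PowerSeries.coeff_mul_C, PowerSeries.coeff_C_mul,
    PowerSeries.coeff_X_pow_mul', PowerSeries.coeff_mk]
  by_cases h2 : m % 2 = 0
  · by_cases hm : 2 ≤ m
    · rw [if_pos hm, if_pos (by omega : (m - 2) % 2 = 0)]
      simp only [if_pos h2]
      have hq : (m - 2) / 2 + 1 = m / 2 := by omega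
      have hc : ((m - 2 : ℕ) : ℂ) + 2 = (m : ℂ) := by
        rw [Nat.cast_sub hm]; push_cast; ring
      have hp : e₁ ^ (m - 2) * (e₁ * f₂) = e₁ ^ (m - 1) * f₂ := by
        rw [← mul_assoc, ← pow_succ]
        congr 2
        omega
      rw [hq, hc, smul_mul_assoc, smul_mul_assoc, hp, upow_f3 m, mul_smul_comm, smul_sub,
        smul_smul, mul_comm (cHalf (m / 2)) (m : ℂ)]
    · rw [if_neg hm]
      simp only [if_pos h2]
      obtain rfl : m = 0 := by omega
      simp [smul_mul_assoc, mul_smul_comm]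
  · simp only [if_neg h2]
    split_ifs with h3 h4
    · omega
    · simp
    · simp

lemma cHalf_zero : cHalf 0 = 1 := by simp [cHalf]

lemma cHalf_one : cHalf 1 = 1/2 := by simp [cHalf]

lemma R5 : wS + tv ^ 2 * (wS * C (e₁ ^ 2)) = s := by
  ext m
  simp only [map_add, tv, C, s, wS, PowerSeries.coeff_mul_C,
    PowerSeries.coeff_X_pow_mul', PowerSeries.coeff_mk]
  by_cases h2 : m % 2 = 0
  · by_cases hm : 2 ≤ m
    · rw [if_pos hm, if_pos (by omega : (m - 2) % 2 = 0)]
      simp only [if_pos h2]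
      have hq : (m - 2) / 2 + 1 = m / 2 := by omega
      have hc : ((m - 2 : ℕ) : ℂ) + 2 = (m : ℂ) := by
        rw [Nat.cast_sub hm]; push_cast; ring
      have hp : e₁ ^ (m - 2) * e₁ ^ 2 = e₁ ^ m := by
        rw [← pow_add]; congr 1; omega
      rw [hq, hc, smul_mul_assoc, hp]
      rw [← add_smul]
      congr 1
      have hrec := cHalf_rec (m / 2)
      have hm2 : (m : ℂ) = 2 * ((m / 2 : ℕ) : ℂ) := by
        exact_mod_cast (by omega : m = 2 * (m / 2))
      rw [hm2]
      linear_combination 2 * hrec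
    · rw [if_neg hm]
      simp only [if_pos h2]
      obtain rfl : m = 0 := by omega
      norm_num [cHalf_zero, cHalf_one]
  · simp only [if_neg h2]
    split_ifs with h3 h4
    · omega
    · simp
    · simp

lemma sm2 (y : V) : (2 : V) * y = (2:ℂ) • y := by rw [Algebra.smul_def, map_ofNat]

lemma sm3 (y : V) : (3 : V) * y = (3:ℂ) • y := by rw [Algebra.smul_def, map_ofNat]

lemma tvsq_comm (f : V) : f * tv ^ 2 = tv ^ 2 * f := ((PowerSeries.commute_X f).pow_right 2).eq

lemma mulX2 (f g : V) : f * (tv ^ 2 * g) = tv ^ 2 * (f * g) := by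
  rw [← mul_assoc, tvsq_comm, mul_assoc]

lemma uc13 : e₁ * (e₁ * e₃) = (e₁ * e₃) * e₁ := by
  nth_rewrite 1 [ue13]; noncomm_ring

lemma uc1f2 : e₁ * (e₁ * f₂) = (e₁ * f₂) * e₁ := by
  nth_rewrite 1 [ue1f2]; noncomm_ring

lemma uQexp : e₁ * e₃ * (2 * h₁ + 1) = 2 * (e₁ * e₃ * h₁) + e₁ * e₃ := by noncomm_ring

lemma uQexp' : e₁ * f₂ * (2 * h₁ + 1) = 2 * (e₁ * f₂ * h₁) + e₁ * f₂ := by noncomm_ring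

lemma uh1e1' : h₁ * e₁ = e₁ * h₁ + 2 * e₁ := by rw [uh1e1, two_smul, two_mul]

lemma uQ1 : h₁ * (e₁ * e₃ * (2 * h₁ + 1))
    = e₁ * e₃ * (2 * h₁ + 1) * h₁ + 3 * (e₁ * e₃ * (2 * h₁ + 1)) := by
  calc h₁ * (e₁ * e₃ * (2 * h₁ + 1))
      = (h₁ * e₁) * (e₃ * (2 * h₁ + 1)) := by noncomm_ring
    _ = (e₁ * h₁ + 2 * e₁) * (e₃ * (2 * h₁ + 1)) := by rw [uh1e1']
    _ = e₁ * ((h₁ * e₃) * (2 * h₁ + 1)) + 2 * (e₁ * (e₃ * (2 * h₁ + 1))) := by noncomm_ring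
    _ = e₁ * ((e₃ * h₁ + e₃) * (2 * h₁ + 1)) + 2 * (e₁ * (e₃ * (2 * h₁ + 1))) := by rw [uh1e3]
    _ = e₁ * (e₃ * (h₁ * (2 * h₁ + 1))) + 3 * (e₁ * (e₃ * (2 * h₁ + 1))) := by noncomm_ring
    _ = e₁ * (e₃ * ((2 * h₁ + 1) * h₁)) + 3 * (e₁ * (e₃ * (2 * h₁ + 1))) := by
        rw [show h₁ * (2 * h₁ + 1) = (2 * h₁ + 1) * h₁ by noncomm_ring]
    _ = e₁ * e₃ * (2 * h₁ + 1) * h₁ + 3 * (e₁ * e₃ * (2 * h₁ + 1)) := by noncomm_ring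

lemma uQ2 : h₁ * (e₁ * f₂ * (2 * h₁ + 1))
    = e₁ * f₂ * (2 * h₁ + 1) * h₁ + 3 * (e₁ * f₂ * (2 * h₁ + 1)) := by
  calc h₁ * (e₁ * f₂ * (2 * h₁ + 1))
      = (h₁ * e₁) * (f₂ * (2 * h₁ + 1)) := by noncomm_ring
    _ = (e₁ * h₁ + 2 * e₁) * (f₂ * (2 * h₁ + 1)) := by rw [uh1e1']
    _ = e₁ * ((h₁ * f₂) * (2 * h₁ + 1)) + 2 * (e₁ * (f₂ * (2 * h₁ + 1))) := by noncomm_ring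
    _ = e₁ * ((f₂ * h₁ + f₂) * (2 * h₁ + 1)) + 2 * (e₁ * (f₂ * (2 * h₁ + 1))) := by rw [uh1f2]
    _ = e₁ * (f₂ * (h₁ * (2 * h₁ + 1))) + 3 * (e₁ * (f₂ * (2 * h₁ + 1))) := by noncomm_ring
    _ = e₁ * (f₂ * ((2 * h₁ + 1) * h₁)) + 3 * (e₁ * (f₂ * (2 * h₁ + 1))) := by
        rw [show h₁ * (2 * h₁ + 1) = (2 * h₁ + 1) * h₁ by noncomm_ring]
    _ = e₁ * f₂ * (2 * h₁ + 1) * h₁ + 3 * (e₁ * f₂ * (2 * h₁ + 1)) := by noncomm_ring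

lemma ushuffle : e₁ * e₃ * e₁ ^ 2 * h₁ = e₁ ^ 2 * (e₁ * e₃ * h₁) := by
  calc e₁ * e₃ * e₁ ^ 2 * h₁ = e₁ * (e₃ * e₁ ^ 2) * h₁ := by noncomm_ring
    _ = e₁ * (e₁ ^ 2 * e₃) * h₁ := by rw [upow_e3]
    _ = e₁ ^ 2 * (e₁ * e₃ * h₁) := by noncomm_ring

lemma ushuffle' : e₁ * f₂ * e₁ ^ 2 * h₁ = e₁ ^ 2 * (e₁ * f₂ * h₁) := by
  calc e₁ * f₂ * e₁ ^ 2 * h₁ = e₁ * (f₂ * e₁ ^ 2) * h₁ := by noncomm_ring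
    _ = e₁ * (e₁ ^ 2 * f₂) * h₁ := by rw [upow_f2]
    _ = e₁ ^ 2 * (e₁ * f₂ * h₁) := by noncomm_ring

lemma R5' (y : U) : tv ^ 2 * (wS * C y) + tv ^ 2 * (tv ^ 2 * (wS * C (e₁ ^ 2 * y)))
    = tv ^ 2 * (s * C y) := by
  have h : wS * C y + tv ^ 2 * (wS * C (e₁ ^ 2 * y)) = s * C y := by
    calc wS * C y + tv ^ 2 * (wS * C (e₁ ^ 2 * y))
        = wS * C y + (tv ^ 2 * (wS * C (e₁ ^ 2))) * C y := by
          rw [map_mul, mul_assoc, ← mul_assoc (wS) (C (e₁^2)) (C y), mul_assoc]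
    _ = (wS + tv ^ 2 * (wS * C (e₁ ^ 2))) * C y := by rw [add_mul]
    _ = s * C y := by rw [R5]
  rw [← mul_add, h]

lemma B1 : T + T' = (2:ℂ) • s := by simp only [T, T']; simp only [sub_eq_add_neg, ← neg_one_smul ℂ (M := V)]; module

lemma B2 : T - T' = (2:ℂ) • (tv * C e₁) := by simp only [T, T']; simp only [sub_eq_add_neg, ← neg_one_smul ℂ (M := V)]; module

lemma B3 : T ^ 2 - T' ^ 2 = (4:ℂ) • (tv * (s * C e₁)) := by
  have hs : C e₁ * s = s * C e₁ := (s_comm e₁ rfl).symm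
  have e1 : T ^ 2 = (tv * C e₁) * (tv * C e₁) + (tv * C e₁) * s + s * (tv * C e₁) + s * s := by
    rw [T, pow_two, add_mul, mul_add, mul_add]; abel
  have e2 : T' ^ 2 = (tv * C e₁) * (tv * C e₁) - (tv * C e₁) * s - s * (tv * C e₁) + s * s := by
    rw [T', pow_two, neg_add_eq_sub, sub_mul, mul_sub, mul_sub]; abel
  rw [e1, e2, mul_assoc tv (C e₁) s, hs, ← mul_assoc s tv (C e₁), tv_comm s,
    mul_assoc tv s (C e₁)]
  simp only [sub_eq_add_neg, ← neg_one_smul ℂ (M := V)]; module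

lemma c1 : C (e₁ * e₃) * s = s * C (e₁ * e₃) := (s_comm _ uc13).symm

lemma c2 : C (e₁ * e₃) * wS = wS * C (e₁ * e₃) := (wS_comm _ uc13).symm

lemma c1' : C (e₁ * f₂) * s = s * C (e₁ * f₂) := (s_comm _ uc1f2).symm

lemma c2' : C (e₁ * f₂) * wS = wS * C (e₁ * f₂) := (wS_comm _ uc1f2).symm

lemma h2h : C (2 * h₁ + 1) * s = s * C (2 * h₁ + 1) + (4:ℂ) • (tv ^ 2 * (wS * C (e₁ ^ 2))) := by
  have hC : (C (2 * h₁ + 1) : V) = 2 * C h₁ + 1 := by rw [map_add, map_mul, map_ofNat, map_one]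
  have hC2 : s * C (2 * h₁ + 1) = 2 * (s * C h₁) + s := by rw [hC]; noncomm_ring
  calc C (2 * h₁ + 1) * s = (2 * C h₁ + 1) * s := by rw [hC]
    _ = 2 * (C h₁ * s) + s := by noncomm_ring
    _ = 2 * (s * C h₁ + (2:ℂ) • (tv ^ 2 * (wS * C (e₁ ^ 2)))) + s := by rw [R3]
    _ = s * C (2 * h₁ + 1) + (4:ℂ) • (tv ^ 2 * (wS * C (e₁ ^ 2))) := by
        rw [hC2, mul_add, sm2, sm2, smul_smul]
        module

lemma hQs : C (e₁ * e₃ * (2 * h₁ + 1)) * s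
    = s * C (e₁ * e₃ * (2 * h₁ + 1)) + (4:ℂ) • (tv ^ 2 * (wS * C (e₁ * e₃ * e₁ ^ 2))) := by
  have c3 : C (e₁ * e₃) * (tv ^ 2 * (wS * C (e₁ ^ 2))) = tv ^ 2 * (wS * C (e₁ * e₃ * e₁ ^ 2)) := by
    rw [mulX2]
    rw [show C (e₁ * e₃) * (wS * C (e₁ ^ 2)) = wS * C (e₁ * e₃ * e₁ ^ 2) from by
      rw [← mul_assoc, c2, mul_assoc, ← map_mul]]
  calc C (e₁ * e₃ * (2 * h₁ + 1)) * s
      = C (e₁ * e₃) * (C (2 * h₁ + 1) * s) := by rw [map_mul, mul_assoc]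
    _ = C (e₁ * e₃) * (s * C (2 * h₁ + 1)) + (4:ℂ) • (C (e₁ * e₃) * (tv ^ 2 * (wS * C (e₁ ^ 2)))) := by
        rw [h2h, mul_add, mul_smul_comm]
    _ = s * C (e₁ * e₃ * (2 * h₁ + 1)) + (4:ℂ) • (tv ^ 2 * (wS * C (e₁ * e₃ * e₁ ^ 2))) := by
        rw [← mul_assoc, c1, mul_assoc, ← map_mul, c3]

lemma hQs' : C (e₁ * f₂ * (2 * h₁ + 1)) * s
    = s * C (e₁ * f₂ * (2 * h₁ + 1)) + (4:ℂ) • (tv ^ 2 * (wS * C (e₁ * f₂ * e₁ ^ 2))) := by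
  have c3 : C (e₁ * f₂) * (tv ^ 2 * (wS * C (e₁ ^ 2))) = tv ^ 2 * (wS * C (e₁ * f₂ * e₁ ^ 2)) := by
    rw [mulX2]
    rw [show C (e₁ * f₂) * (wS * C (e₁ ^ 2)) = wS * C (e₁ * f₂ * e₁ ^ 2) from by
      rw [← mul_assoc, c2', mul_assoc, ← map_mul]]
  calc C (e₁ * f₂ * (2 * h₁ + 1)) * s
      = C (e₁ * f₂) * (C (2 * h₁ + 1) * s) := by rw [map_mul, mul_assoc]
    _ = C (e₁ * f₂) * (s * C (2 * h₁ + 1)) + (4:ℂ) • (C (e₁ * f₂) * (tv ^ 2 * (wS * C (e₁ ^ 2)))) := by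
        rw [h2h, mul_add, mul_smul_comm]
    _ = s * C (e₁ * f₂ * (2 * h₁ + 1)) + (4:ℂ) • (tv ^ 2 * (wS * C (e₁ * f₂ * e₁ ^ 2))) := by
        rw [← mul_assoc, c1', mul_assoc, ← map_mul, c3]

lemma hQC : (C (e₁ * e₃ * (2 * h₁ + 1)) : V) = (2:ℂ) • C (e₁ * e₃ * h₁) + C (e₁ * e₃) := by
  rw [uQexp, map_add, map_mul, map_ofNat, sm2]

lemma hQC' : (C (e₁ * f₂ * (2 * h₁ + 1)) : V) = (2:ℂ) • C (e₁ * f₂ * h₁) + C (e₁ * f₂) := by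
  rw [uQexp', map_add, map_mul, map_ofNat, sm2]

lemma lhs1 : br H₁ E₂
    = -(s * C e₂) - ((1:ℂ)/2) • (tv ^ 2 * (s * C (e₁ * e₃ * h₁)))
      - ((3:ℂ)/4) • (tv ^ 2 * (s * C (e₁ * e₃))) := by
  have SA : s * C h₁ * C e₂ = s * C (e₂ * h₁) - s * C e₂ := by
    rw [mul_assoc, ← map_mul, uh1e2, map_sub, mul_sub]
  have hR2 : C e₂ * s = s * C e₂ - tv ^ 2 * (wS * C (e₁ * e₃)) := by
    rw [eq_sub_iff_add_eq, ← R2]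
  have SB : C e₂ * (s * C h₁) = s * C (e₂ * h₁) - tv ^ 2 * (wS * C (e₁ * e₃ * h₁)) := by
    calc C e₂ * (s * C h₁) = (C e₂ * s) * C h₁ := by rw [mul_assoc]
      _ = (s * C e₂ - tv ^ 2 * (wS * C (e₁ * e₃))) * C h₁ := by rw [hR2]
      _ = s * (C e₂ * C h₁) - tv ^ 2 * (wS * (C (e₁ * e₃) * C h₁)) := by
          rw [sub_mul, mul_assoc, mul_assoc, mul_assoc]
      _ = s * C (e₂ * h₁) - tv ^ 2 * (wS * C (e₁ * e₃ * h₁)) := by rw [← map_mul, ← map_mul]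
  have SC : s * C h₁ * (tv ^ 2 * C (e₁ * e₃ * (2 * h₁ + 1)))
      = tv ^ 2 * (s * C (e₁ * e₃ * (2 * h₁ + 1) * h₁))
        + (3:ℂ) • (tv ^ 2 * (s * C (e₁ * e₃ * (2 * h₁ + 1)))) := by
    calc s * C h₁ * (tv ^ 2 * C (e₁ * e₃ * (2 * h₁ + 1)))
        = tv ^ 2 * (s * C h₁ * C (e₁ * e₃ * (2 * h₁ + 1))) := mulX2 _ _
      _ = tv ^ 2 * (s * C (h₁ * (e₁ * e₃ * (2 * h₁ + 1)))) := by rw [mul_assoc s, ← map_mul]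
      _ = tv ^ 2 * (s * (C (e₁ * e₃ * (2 * h₁ + 1) * h₁) + (3:ℂ) • C (e₁ * e₃ * (2 * h₁ + 1)))) := by
          rw [uQ1, map_add]
          rw [show (C (3 * (e₁ * e₃ * (2 * h₁ + 1))) : V) = (3:ℂ) • C (e₁ * e₃ * (2 * h₁ + 1)) from by
            rw [map_mul, map_ofNat, sm3]]
      _ = tv ^ 2 * (s * C (e₁ * e₃ * (2 * h₁ + 1) * h₁))
          + (3:ℂ) • (tv ^ 2 * (s * C (e₁ * e₃ * (2 * h₁ + 1)))) := by
          rw [mul_add, mul_smul_comm, mul_add, mul_smul_comm]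
  have SD : (tv ^ 2 * C (e₁ * e₃ * (2 * h₁ + 1))) * (s * C h₁)
      = tv ^ 2 * (s * C (e₁ * e₃ * (2 * h₁ + 1) * h₁))
        + (4:ℂ) • (tv ^ 2 * (tv ^ 2 * (wS * C (e₁ ^ 2 * (e₁ * e₃ * h₁))))) := by
    calc (tv ^ 2 * C (e₁ * e₃ * (2 * h₁ + 1))) * (s * C h₁)
        = tv ^ 2 * ((C (e₁ * e₃ * (2 * h₁ + 1)) * s) * C h₁) := by
          rw [mul_assoc, ← mul_assoc (C (e₁ * e₃ * (2 * h₁ + 1))) s]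
      _ = tv ^ 2 * ((s * C (e₁ * e₃ * (2 * h₁ + 1))
            + (4:ℂ) • (tv ^ 2 * (wS * C (e₁ * e₃ * e₁ ^ 2)))) * C h₁) := by rw [hQs]
      _ = tv ^ 2 * (s * C (e₁ * e₃ * (2 * h₁ + 1) * h₁))
          + (4:ℂ) • (tv ^ 2 * (tv ^ 2 * (wS * C (e₁ * e₃ * e₁ ^ 2 * h₁)))) := by
          rw [add_mul, smul_mul_assoc, mul_assoc s, ← map_mul,
            mul_assoc (tv ^ 2) (wS * C (e₁ * e₃ * e₁ ^ 2)) (C h₁),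
            mul_assoc wS, ← map_mul, mul_add, mul_smul_comm]
      _ = tv ^ 2 * (s * C (e₁ * e₃ * (2 * h₁ + 1) * h₁))
          + (4:ℂ) • (tv ^ 2 * (tv ^ 2 * (wS * C (e₁ ^ 2 * (e₁ * e₃ * h₁))))) := by
          rw [ushuffle]
  have key : br H₁ E₂ = -(s * C e₂) - ((3:ℂ)/4) • (tv ^ 2 * (s * C (e₁ * e₃ * (2 * h₁ + 1))))
      + (tv ^ 2 * (wS * C (e₁ * e₃ * h₁))
        + tv ^ 2 * (tv ^ 2 * (wS * C (e₁ ^ 2 * (e₁ * e₃ * h₁))))) := by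
    simp only [br, H₁, E₂]
    rw [mul_sub, sub_mul, mul_smul_comm, smul_mul_assoc, SA, SB, SC, SD]
    simp only [smul_add, smul_smul]
    simp only [sub_eq_add_neg, ← neg_one_smul ℂ (M := V)]; module
  rw [key, R5' (e₁ * e₃ * h₁), hQC]
  simp only [mul_add, mul_smul_comm, smul_add, smul_smul]
  simp only [sub_eq_add_neg, ← neg_one_smul ℂ (M := V)]; module

lemma lhs2 : br H₁ F₃
    = -(s * C f₃) + ((1:ℂ)/2) • (tv ^ 2 * (s * C (e₁ * f₂ * h₁)))
      + ((3:ℂ)/4) • (tv ^ 2 * (s * C (e₁ * f₂))) := by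
  have SA : s * C h₁ * C f₃ = s * C (f₃ * h₁) - s * C f₃ := by
    rw [mul_assoc, ← map_mul, uh1f3, map_sub, mul_sub]
  have hR4 : C f₃ * s = s * C f₃ + tv ^ 2 * (wS * C (e₁ * f₂)) := by
    exact sub_eq_iff_eq_add.mp R4.symm
  have SB : C f₃ * (s * C h₁) = s * C (f₃ * h₁) + tv ^ 2 * (wS * C (e₁ * f₂ * h₁)) := by
    calc C f₃ * (s * C h₁) = (C f₃ * s) * C h₁ := by rw [mul_assoc]
      _ = (s * C f₃ + tv ^ 2 * (wS * C (e₁ * f₂))) * C h₁ := by rw [hR4]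
      _ = s * (C f₃ * C h₁) + tv ^ 2 * (wS * (C (e₁ * f₂) * C h₁)) := by
          rw [add_mul, mul_assoc, mul_assoc, mul_assoc]
      _ = s * C (f₃ * h₁) + tv ^ 2 * (wS * C (e₁ * f₂ * h₁)) := by rw [← map_mul, ← map_mul]
  have SC : s * C h₁ * (tv ^ 2 * C (e₁ * f₂ * (2 * h₁ + 1)))
      = tv ^ 2 * (s * C (e₁ * f₂ * (2 * h₁ + 1) * h₁))
        + (3:ℂ) • (tv ^ 2 * (s * C (e₁ * f₂ * (2 * h₁ + 1)))) := by
    calc s * C h₁ * (tv ^ 2 * C (e₁ * f₂ * (2 * h₁ + 1)))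
        = tv ^ 2 * (s * C h₁ * C (e₁ * f₂ * (2 * h₁ + 1))) := mulX2 _ _
      _ = tv ^ 2 * (s * C (h₁ * (e₁ * f₂ * (2 * h₁ + 1)))) := by rw [mul_assoc s, ← map_mul]
      _ = tv ^ 2 * (s * (C (e₁ * f₂ * (2 * h₁ + 1) * h₁) + (3:ℂ) • C (e₁ * f₂ * (2 * h₁ + 1)))) := by
          rw [uQ2, map_add]
          rw [show (C (3 * (e₁ * f₂ * (2 * h₁ + 1))) : V) = (3:ℂ) • C (e₁ * f₂ * (2 * h₁ + 1)) from by
            rw [map_mul, map_ofNat, sm3]]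
      _ = tv ^ 2 * (s * C (e₁ * f₂ * (2 * h₁ + 1) * h₁))
          + (3:ℂ) • (tv ^ 2 * (s * C (e₁ * f₂ * (2 * h₁ + 1)))) := by
          rw [mul_add, mul_smul_comm, mul_add, mul_smul_comm]
  have SD : (tv ^ 2 * C (e₁ * f₂ * (2 * h₁ + 1))) * (s * C h₁)
      = tv ^ 2 * (s * C (e₁ * f₂ * (2 * h₁ + 1) * h₁))
        + (4:ℂ) • (tv ^ 2 * (tv ^ 2 * (wS * C (e₁ ^ 2 * (e₁ * f₂ * h₁))))) := by
    calc (tv ^ 2 * C (e₁ * f₂ * (2 * h₁ + 1))) * (s * C h₁)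
        = tv ^ 2 * ((C (e₁ * f₂ * (2 * h₁ + 1)) * s) * C h₁) := by
          rw [mul_assoc, ← mul_assoc (C (e₁ * f₂ * (2 * h₁ + 1))) s]
      _ = tv ^ 2 * ((s * C (e₁ * f₂ * (2 * h₁ + 1))
            + (4:ℂ) • (tv ^ 2 * (wS * C (e₁ * f₂ * e₁ ^ 2)))) * C h₁) := by rw [hQs']
      _ = tv ^ 2 * (s * C (e₁ * f₂ * (2 * h₁ + 1) * h₁))
          + (4:ℂ) • (tv ^ 2 * (tv ^ 2 * (wS * C (e₁ * f₂ * e₁ ^ 2 * h₁)))) := by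
          rw [add_mul, smul_mul_assoc, mul_assoc s, ← map_mul,
            mul_assoc (tv ^ 2) (wS * C (e₁ * f₂ * e₁ ^ 2)) (C h₁),
            mul_assoc wS, ← map_mul, mul_add, mul_smul_comm]
      _ = tv ^ 2 * (s * C (e₁ * f₂ * (2 * h₁ + 1) * h₁))
          + (4:ℂ) • (tv ^ 2 * (tv ^ 2 * (wS * C (e₁ ^ 2 * (e₁ * f₂ * h₁))))) := by
          rw [ushuffle']
  have key : br H₁ F₃ = -(s * C f₃) + ((3:ℂ)/4) • (tv ^ 2 * (s * C (e₁ * f₂ * (2 * h₁ + 1))))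
      - (tv ^ 2 * (wS * C (e₁ * f₂ * h₁))
        + tv ^ 2 * (tv ^ 2 * (wS * C (e₁ ^ 2 * (e₁ * f₂ * h₁))))) := by
    simp only [br, H₁, F₃]
    rw [mul_add, add_mul, mul_smul_comm, smul_mul_assoc, SA, SB, SC, SD]
    simp only [smul_add, smul_smul]
    simp only [sub_eq_add_neg, ← neg_one_smul ℂ (M := V)]; module
  rw [key, R5' (e₁ * f₂ * h₁), hQC']
  simp only [mul_add, mul_smul_comm, smul_add, smul_smul]
  simp only [sub_eq_add_neg, ← neg_one_smul ℂ (M := V)]; module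

lemma p1 : (T + T') * E₂ = (2:ℂ) • (s * C e₂)
    - ((1:ℂ)/2) • (tv ^ 2 * (s * C (e₁ * e₃ * (2 * h₁ + 1)))) := by
  rw [B1, smul_mul_assoc]
  simp only [E₂]
  rw [mul_sub, mul_smul_comm, mulX2, smul_sub, smul_smul]
  norm_num

lemma p2 : tv * ((T - T') * E₃ * H₁) = (2:ℂ) • (tv ^ 2 * (s * C (e₁ * e₃ * h₁))) := by
  rw [B2]
  simp only [E₃, H₁]
  rw [smul_mul_assoc, smul_mul_assoc, mul_smul_comm]
  have i1 : tv * C e₁ * C e₃ * (s * C h₁) = tv * (s * C (e₁ * e₃ * h₁)) := by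
    rw [mul_assoc tv (C e₁) (C e₃), ← map_mul]
    rw [mul_assoc tv (C (e₁ * e₃)) (s * C h₁)]
    rw [← mul_assoc (C (e₁ * e₃)) s (C h₁), c1, mul_assoc s, ← map_mul]
  rw [i1, ← mul_assoc tv tv, ← pow_two]

lemma p3 : tv * ((T ^ 2 - T' ^ 2) * E₃) = (4:ℂ) • (tv ^ 2 * (s * C (e₁ * e₃))) := by
  rw [B3]
  simp only [E₃]
  rw [smul_mul_assoc, mul_smul_comm]
  have i1 : tv * (s * C e₁) * C e₃ = tv * (s * C (e₁ * e₃)) := by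
    rw [mul_assoc tv (s * C e₁) (C e₃), mul_assoc s (C e₁) (C e₃), ← map_mul]
  rw [i1, ← mul_assoc tv tv, ← pow_two]

lemma rhs1 : -(((1:ℂ)/2) • ((T + T') * E₂))
      - ((1:ℂ)/2) • (tv * ((T - T') * E₃ * H₁))
      - ((1:ℂ)/4) • (tv * ((T ^ 2 - T' ^ 2) * E₃))
    = -(s * C e₂) - ((1:ℂ)/2) • (tv ^ 2 * (s * C (e₁ * e₃ * h₁)))
      - ((3:ℂ)/4) • (tv ^ 2 * (s * C (e₁ * e₃))) := by
  rw [p1, p2, p3, hQC]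
  simp only [mul_add, mul_smul_comm, smul_add, smul_sub, smul_smul]
  simp only [sub_eq_add_neg, ← neg_one_smul ℂ (M := V)]; module

lemma p1' : (T + T') * F₃ = (2:ℂ) • (s * C f₃)
    + ((1:ℂ)/2) • (tv ^ 2 * (s * C (e₁ * f₂ * (2 * h₁ + 1)))) := by
  rw [B1, smul_mul_assoc]
  simp only [F₃]
  rw [mul_add, mul_smul_comm, mulX2, smul_add, smul_smul]
  norm_num

lemma p2' : tv * ((T - T') * F₂ * H₁) = (2:ℂ) • (tv ^ 2 * (s * C (e₁ * f₂ * h₁))) := by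
  rw [B2]
  simp only [F₂, H₁]
  rw [smul_mul_assoc, smul_mul_assoc, mul_smul_comm]
  have i1 : tv * C e₁ * C f₂ * (s * C h₁) = tv * (s * C (e₁ * f₂ * h₁)) := by
    rw [mul_assoc tv (C e₁) (C f₂), ← map_mul]
    rw [mul_assoc tv (C (e₁ * f₂)) (s * C h₁)]
    rw [← mul_assoc (C (e₁ * f₂)) s (C h₁), c1', mul_assoc s, ← map_mul]
  rw [i1, ← mul_assoc tv tv, ← pow_two]

lemma p3' : tv * ((T ^ 2 - T' ^ 2) * F₂) = (4:ℂ) • (tv ^ 2 * (s * C (e₁ * f₂))) := by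
  rw [B3]
  simp only [F₂]
  rw [smul_mul_assoc, mul_smul_comm]
  have i1 : tv * (s * C e₁) * C f₂ = tv * (s * C (e₁ * f₂)) := by
    rw [mul_assoc tv (s * C e₁) (C f₂), mul_assoc s (C e₁) (C f₂), ← map_mul]
  rw [i1, ← mul_assoc tv tv, ← pow_two]

lemma rhs2 : -(((1:ℂ)/2) • ((T + T') * F₃))
      + ((1:ℂ)/2) • (tv * ((T - T') * F₂ * H₁))
      + ((1:ℂ)/4) • (tv * ((T ^ 2 - T' ^ 2) * F₂))
    = -(s * C f₃) + ((1:ℂ)/2) • (tv ^ 2 * (s * C (e₁ * f₂ * h₁)))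
      + ((3:ℂ)/4) • (tv ^ 2 * (s * C (e₁ * f₂))) := by
  rw [p1', p2', p3', hQC']
  simp only [mul_add, mul_smul_comm, smul_add, smul_smul]
  simp only [sub_eq_add_neg, ← neg_one_smul ℂ (M := V)]; module

/-- the commutators `[H₁, E₂]` and `[H₁, F₃]` in `U(gl(2|1))[[t]]`. -/
theorem statement2 :
    br H₁ E₂ = -(((1 : ℂ) / 2) • ((T + T') * E₂))
        - ((1 : ℂ) / 2) • (tv * ((T - T') * E₃ * H₁))
        - ((1 : ℂ) / 4) • (tv * ((T ^ 2 - T' ^ 2) * E₃)) ∧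
    br H₁ F₃ = -(((1 : ℂ) / 2) • ((T + T') * F₃))
        + ((1 : ℂ) / 2) • (tv * ((T - T') * F₂ * H₁))
        + ((1 : ℂ) / 4) • (tv * ((T ^ 2 - T' ^ 2) * F₂)) :=
  ⟨lhs1.trans rhs1.symm, lhs2.trans rhs2.symm⟩

end SuperJordanian
end
end

section
/- Let φ: U → U be the algebra automorphism of U = U(gl(2|1)) determined by φ(e₁₁) = −e₂₂, φ(e₂₂) = −e₁₁, φ(e₃₃) = −e₃₃, φ(e₁₂) = e₁₂, φ(e₂₁) = e₂₁, φ(e₂₃) = e₃₁, φ(e₃₂) = −e₁₃, φ(e₁₃) = −e₃₂, φ(e₃₁) = e₂₃, and let Φ: U[[t]] → U[[t]] be its coefficient-wise extension to power series. Then Φ fixes the Jordanian Borel generators and permutes the deformed fermionic generators: Φ(T) = T, Φ(T') = T', Φ(H₁) = H₁, Φ(F₁) = F₁, Φ(E₂) = F₃, Φ(F₂) = −E₃, Φ(H₂) = −H₃, Φ(E₃) = −F₂, Φ(F₃) = E₂, Φ(H₃) = −H₂ (Proposition 2 of the paper). -/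
noncomputable section

namespace SuperJordanian

open scoped BigOperators

/-- The defining property of the automorphism `φ` on the generators `e_{ij}`. -/
def phiProp (φ : U →ₐ[ℂ] U) : Prop :=
    φ (e 0 0) = -(e 1 1) ∧ φ (e 1 1) = -(e 0 0) ∧ φ (e 2 2) = -(e 2 2) ∧
    φ (e 0 1) = e 0 1 ∧ φ (e 1 0) = e 1 0 ∧ φ (e 1 2) = e 2 0 ∧
    φ (e 2 1) = -(e 0 2) ∧ φ (e 0 2) = -(e 2 1) ∧ φ (e 2 0) = e 1 2

/-- the coefficient-wise extension `Φ` of `φ` to `U[[t]]` fixes the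
Jordanian Borel generators and permutes the deformed fermionic generators. -/
theorem statement11 (φ : U →ₐ[ℂ] U) (hφ : phiProp φ) :
    PowerSeries.map (φ : U →+* U) T = T ∧
    PowerSeries.map (φ : U →+* U) T' = T' ∧
    PowerSeries.map (φ : U →+* U) H₁ = H₁ ∧
    PowerSeries.map (φ : U →+* U) F₁ = F₁ ∧
    PowerSeries.map (φ : U →+* U) E₂ = F₃ ∧
    PowerSeries.map (φ : U →+* U) F₂ = -E₃ ∧
    PowerSeries.map (φ : U →+* U) H₂ = -H₃ ∧
    PowerSeries.map (φ : U →+* U) E₃ = -F₂ ∧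
    PowerSeries.map (φ : U →+* U) F₃ = E₂ ∧
    PowerSeries.map (φ : U →+* U) H₃ = -H₂ := by

  obtain ⟨h00, h11, h22, h01, h10, h12, h21, h02, h20⟩ := hφ
  have he1 : φ e₁ = e₁ := h01
  have hf1 : φ f₁ = f₁ := h10
  have hh1 : φ h₁ = h₁ := by simp [h₁, map_sub, h00, h11]; abel
  have hh2 : φ h₂ = -h₃ := by
    simp [h₂, h₃, h₁, map_add, h11, h22]; abel
  have hh3 : φ h₃ = -h₂ := by
    simp [h₂, h₃, h₁, map_add, map_sub, h00, h11, h22]; abel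
  have he2 : φ e₂ = f₃ := h12
  have hf2 : φ f₂ = -e₃ := by simpa [f₂, e₃] using h21
  have he3 : φ e₃ = -f₂ := by simpa [f₂, e₃] using h02
  have hf3 : φ f₃ = e₂ := h20
  -- helper facts about the power series map
  set Φ : V →+* V := PowerSeries.map (φ : U →+* U) with hΦ
  have hC : ∀ a : U, Φ (C a) = C (φ a) := fun a => PowerSeries.map_C _ a
  have ht : Φ tv = tv := PowerSeries.map_X _
  have hsmul : ∀ (c : ℂ) (p : V), Φ (c • p) = c • Φ p := by
    intro c p
    rw [Algebra.smul_def, Algebra.smul_def, map_mul]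
    congr 1
    rw [PowerSeries.algebraMap_apply]
    exact (hC _).trans (congrArg _ (AlgHom.commutes φ c))
  have hs : Φ s = s := by
    ext n
    rw [hΦ, PowerSeries.coeff_map]
    simp only [s, PowerSeries.coeff_mk]
    split_ifs
    · rw [show ((φ : U →+* U) : U → U) = φ from rfl, map_smul, map_pow, he1]
    · exact map_zero _
  refine ⟨?_, ?_, ?_, ?_, ?_, ?_, ?_, ?_, ?_, ?_⟩
  · rw [T, map_add, map_mul, ht, hC, he1, hs]
  · rw [T', map_add, map_neg, map_mul, ht, hC, he1, hs]
  · rw [H₁, map_mul, hs, hC, hh1]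
  · rw [F₁, map_sub, hC, hf1, hsmul, map_mul, map_pow, ht, hC,
      map_mul, map_sub, map_pow, map_one, he1, hh1]
  · have hlin : φ (2 * h₁ + 1) = 2 * h₁ + 1 := by
      rw [map_add, map_mul, map_one, map_ofNat, hh1]
    have hprod : φ (e₁ * e₃ * (2 * h₁ + 1)) = -(e₁ * f₂ * (2 * h₁ + 1)) := by
      rw [map_mul, map_mul, he1, he3, hlin, mul_neg e₁ f₂,
        neg_mul (e₁ * f₂) (2 * h₁ + 1)]
    rw [E₂, F₃, map_sub, hC, he2, hsmul, map_mul, map_pow, ht, hC, hprod,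
      map_neg, mul_neg (tv ^ 2) (C (e₁ * f₂ * (2 * h₁ + 1))),
      smul_neg ((1 : ℂ) / 4) (tv ^ 2 * C (e₁ * f₂ * (2 * h₁ + 1))), sub_neg_eq_add]
  · rw [F₂, E₃, hC, hf2, map_neg]
  · rw [H₂, H₃, map_sub, hC, hh2, map_neg, hsmul, map_mul, map_pow, ht, hC,
      map_mul, map_pow, he1, hh1, neg_add, ← sub_eq_add_neg]
  · rw [E₃, F₂, hC, he3, map_neg]
  · have hlin : φ (2 * h₁ + 1) = 2 * h₁ + 1 := by
      rw [map_add, map_mul, map_one, map_ofNat, hh1]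
    have hprod : φ (e₁ * f₂ * (2 * h₁ + 1)) = -(e₁ * e₃ * (2 * h₁ + 1)) := by
      rw [map_mul, map_mul, he1, hf2, hlin, mul_neg e₁ e₃,
        neg_mul (e₁ * e₃) (2 * h₁ + 1)]
    rw [F₃, E₂, map_add, hC, hf3, hsmul, map_mul, map_pow, ht, hC, hprod,
      map_neg, mul_neg (tv ^ 2) (C (e₁ * e₃ * (2 * h₁ + 1))),
      smul_neg ((1 : ℂ) / 4) (tv ^ 2 * C (e₁ * e₃ * (2 * h₁ + 1))), ← sub_eq_add_neg]
  · rw [H₃, H₂, map_add, hC, hh3, map_neg, hsmul, map_mul, map_pow, ht, hC,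
      map_mul, map_pow, he1, hh1, neg_sub', sub_neg_eq_add]


end SuperJordanian
end
end
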